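/- arXiv:2103.10903 — 2 statements merged into one kernel-verified Lean document; each statement's English description precedes it below -/
import Mathlib

section
/- If τ_1,...,τ_K satisfy τ_0 c_k/τ_k = 1/λ for all k with ∑_{k=0}^K τ_k = T and c_k > 0, then ∑_{k=1}^K τ_k log(1 + τ_0 c_k / τ_k) = (T − τ_0) log(1 + τ_0 (∑_{k=1}^K c_k)/(T − τ_0)); i.e., under the optimal time-splitting the sum throughput collapses to a single-variable function of τ_0. -/
theorem stmt6 (K : ℕ) (c : Fin K → ℝ) (hc : ∀ k, 0 < c k)
    (T τ0 : ℝ) (hτ0 : τ0 ∈ Set.Ioo 0 T)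
    (τ : Fin K → ℝ) (hτ : ∀ k, 0 < τ k) (lam : ℝ)
    (h1 : ∀ k, τ0 * c k / τ k = 1 / lam)
    (h2 : τ0 + ∑ k, τ k = T) :
    ∑ k, τ k * Real.log (1 + τ0 * c k / τ k)
      = (T - τ0) * Real.log (1 + τ0 * (∑ k, c k) / (T - τ0)) := by
  obtain ⟨h0, hT⟩ := hτ0
  have hsum : ∑ k, τ k = T - τ0 := by linarith
  have hpos : 0 < T - τ0 := by linarith
  have hkey : ∀ k, τ0 * c k = (1 / lam) * τ k := by
    intro k
    have h := h1 k
    rw [div_eq_iff (hτ k).ne'] at h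
    linarith [h]
  have hsc : τ0 * (∑ k, c k) / (T - τ0) = 1 / lam := by
    have : τ0 * (∑ k, c k) = (1 / lam) * (T - τ0) := by
      rw [Finset.mul_sum]
      simp_rw [hkey]
      rw [← Finset.mul_sum, hsum]
    rw [this, mul_div_assoc, div_self hpos.ne', mul_one]
  have harg : ∀ k, τ0 * c k / τ k = τ0 * (∑ k, c k) / (T - τ0) := by
    intro k; rw [h1 k, hsc]
  calc ∑ k, τ k * Real.log (1 + τ0 * c k / τ k)
      = ∑ k, τ k * Real.log (1 + τ0 * (∑ k, c k) / (T - τ0)) := by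
        apply Finset.sum_congr rfl; intro k _; rw [harg k]
    _ = (∑ k, τ k) * Real.log (1 + τ0 * (∑ k, c k) / (T - τ0)) := by
        rw [Finset.sum_mul]
    _ = (T - τ0) * Real.log (1 + τ0 * (∑ k, c k) / (T - τ0)) := by rw [hsum]
end

section
/- Let a > 1 and T > 0, and define f(τ) = (T − τ) log(1 + aτ/(T − τ)) on (0, T). Then f is strictly concave, and its unique maximizer τ* satisfies the equation x log x − x = a − 1 where x = 1 + aτ*/(T − τ*); equivalently x = exp(W((a−1)/e) + 1) with W the Lambert W function, giving τ* = T·(exp(W((a−1)/e)+1) − 1)/(a − 1 + exp(W((a−1)/e)+1)). -/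
open Real Set Filter

noncomputable def Fn9 (a T τ : ℝ) : ℝ := (T - τ) * (Real.log (T + (a-1)*τ) - Real.log (T - τ))
noncomputable def F19 (a T τ : ℝ) : ℝ :=
  Real.log (T - τ) - Real.log (T + (a-1)*τ) + (a-1)*(T - τ)/(T + (a-1)*τ) + 1
noncomputable def F29 (a T τ : ℝ) : ℝ :=
  -(1/(T - τ)) - (a-1)/(T + (a-1)*τ)
    + ((-(a-1))*(T + (a-1)*τ) - (a-1)*(T - τ)*(a-1)) / (T + (a-1)*τ)^2

lemma hg_pos9 {a T x : ℝ} (ha : 1 < a) (hx : x ∈ Set.Ioo 0 T) : 0 < T + (a-1)*x := by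
  have h1 := hx.1; have h2 := hx.2; nlinarith

lemma hh_pos9 {T x : ℝ} (hx : x ∈ Set.Ioo (0:ℝ) T) : 0 < T - x := by
  have := hx.2; linarith

lemma hasDerivAt_Fn9 {a T : ℝ} (ha : 1 < a) {x : ℝ} (hx : x ∈ Set.Ioo 0 T) :
    HasDerivAt (Fn9 a T) (F19 a T x) x := by
  have hg := hg_pos9 ha hx
  have hh := hh_pos9 hx
  have d1 : HasDerivAt (fun τ : ℝ => T - τ) (-1) x := by
    simpa using (hasDerivAt_id x).const_sub T
  have d2 : HasDerivAt (fun τ : ℝ => T + (a-1)*τ) (a-1) x := by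
    simpa using ((hasDerivAt_id x).const_mul (a-1)).const_add T
  have d3 : HasDerivAt (fun τ : ℝ => Real.log (T + (a-1)*τ)) ((a-1)/(T+(a-1)*x)) x :=
    d2.log hg.ne'
  have d4 : HasDerivAt (fun τ : ℝ => Real.log (T - τ)) ((-1)/(T-x)) x := d1.log hh.ne'
  have h := d1.mul (d3.sub d4)
  refine h.congr_deriv ?_
  unfold F19
  simp only [Pi.sub_apply]
  field_simp
  ring

lemma hasDerivAt_F19 {a T : ℝ} (ha : 1 < a) {x : ℝ} (hx : x ∈ Set.Ioo 0 T) :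
    HasDerivAt (F19 a T) (F29 a T x) x := by
  have hg := hg_pos9 ha hx
  have hh := hh_pos9 hx
  have d1 : HasDerivAt (fun τ : ℝ => T - τ) (-1) x := by
    simpa using (hasDerivAt_id x).const_sub T
  have d2 : HasDerivAt (fun τ : ℝ => T + (a-1)*τ) (a-1) x := by
    simpa using ((hasDerivAt_id x).const_mul (a-1)).const_add T
  have d3 : HasDerivAt (fun τ : ℝ => Real.log (T + (a-1)*τ)) ((a-1)/(T+(a-1)*x)) x :=
    d2.log hg.ne'
  have d4 : HasDerivAt (fun τ : ℝ => Real.log (T - τ)) ((-1)/(T-x)) x := d1.log hh.ne'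
  have d5 : HasDerivAt (fun τ : ℝ => (a-1)*(T - τ)) (-(a-1)) x := by
    simpa using d1.const_mul (a-1)
  have d6 := d5.div d2 hg.ne'
  have h := ((d4.sub d3).add d6).add_const 1
  refine h.congr_deriv ?_
  unfold F29
  field_simp

lemma F29_neg {a T : ℝ} (ha : 1 < a) {x : ℝ} (hx : x ∈ Set.Ioo 0 T) : F29 a T x < 0 := by
  have hg := hg_pos9 ha hx
  have hh := hh_pos9 hx
  unfold F29
  have h1 : 0 < 1/(T-x) := by positivity
  have h2 : 0 < (a-1)/(T+(a-1)*x) := by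
    apply div_pos (by linarith) hg
  have h3 : ((-(a-1))*(T + (a-1)*x) - (a-1)*(T - x)*(a-1)) / (T + (a-1)*x)^2 < 0 := by
    apply div_neg_of_neg_of_pos
    · nlinarith [mul_pos (show (0:ℝ) < a-1 by linarith) hg,
        mul_pos (mul_pos (show (0:ℝ) < a-1 by linarith) hh) (show (0:ℝ) < a-1 by linarith)]
    · positivity
  linarith
theorem stmt9 (a T : ℝ) (ha : 1 < a) (hT : 0 < T)
    (w : ℝ) (hw1 : -1 ≤ w) (hw2 : w * Real.exp w = (a - 1) / Real.exp 1) :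
    StrictConcaveOn ℝ (Set.Ioo 0 T) (fun τ => (T - τ) * Real.log (1 + a * τ / (T - τ))) ∧
    ∃! τstar : ℝ, τstar ∈ Set.Ioo 0 T ∧
      IsMaxOn (fun τ => (T - τ) * Real.log (1 + a * τ / (T - τ))) (Set.Ioo 0 T) τstar ∧
      (1 + a * τstar / (T - τstar)) * Real.log (1 + a * τstar / (T - τstar))
          - (1 + a * τstar / (T - τstar)) = a - 1 ∧
      1 + a * τstar / (T - τstar) = Real.exp (w + 1) ∧
      τstar = T * (Real.exp (w + 1) - 1) / (a - 1 + Real.exp (w + 1)) := by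
  set f : ℝ → ℝ := fun τ => (T - τ) * Real.log (1 + a * τ / (T - τ)) with hf_def
  -- basic positivity
  have ha1 : (0:ℝ) < a - 1 := by linarith
  -- w is positive
  have hw0 : 0 < w := by
    by_contra hneg
    push_neg at hneg
    have h1 : 0 < (a - 1) / Real.exp 1 := div_pos ha1 (Real.exp_pos 1)
    have h2 : w * Real.exp w ≤ 0 :=
      mul_nonpos_of_nonpos_of_nonneg hneg (Real.exp_pos w).le
    linarith [hw2 ▸ h2]
  set x0 : ℝ := Real.exp (w + 1) with hx0_def
  have hx0pos : 0 < x0 := Real.exp_pos _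
  have hx01 : 1 < x0 := by
    rw [hx0_def]
    have : (0:ℝ) < w + 1 := by linarith
    calc (1:ℝ) = Real.exp 0 := by simp
    _ < Real.exp (w + 1) := Real.exp_lt_exp.mpr this
  -- key identity: a - 1 = w * x0
  have hkey : a - 1 = w * x0 := by
    have h1 : x0 = Real.exp w * Real.exp 1 := by rw [hx0_def, ← Real.exp_add]
    have h2 : Real.exp 1 ≠ 0 := (Real.exp_pos 1).ne'
    field_simp at hw2
    rw [h1]; nlinarith [hw2]
  have hax : 0 < a - 1 + x0 := by linarith
  set τs : ℝ := T * (x0 - 1) / (a - 1 + x0) with hτs_def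
  have hτs0 : 0 < τs := by
    apply div_pos (by nlinarith) hax
  have hτsub : T - τs = T * a / (a - 1 + x0) := by
    rw [hτs_def]; field_simp; ring
  have hτsT : τs < T := by
    have : 0 < T - τs := by rw [hτsub]; positivity
    linarith
  have hτsmem : τs ∈ Set.Ioo 0 T := ⟨hτs0, hτsT⟩
  -- the ratio
  have hratio : 1 + a * τs / (T - τs) = x0 := by
    rw [hτsub, hτs_def]
    have hTne : T ≠ 0 := hT.ne'
    have hane : a ≠ 0 := by linarith
    field_simp
    ring
  -- f equals Fn9 on Ioo 0 T
  have hEq : ∀ x ∈ Set.Ioo 0 T, f x = Fn9 a T x := by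
    intro x hx
    have hg := hg_pos9 ha hx
    have hh := hh_pos9 hx
    have h1 : 1 + a * x / (T - x) = (T + (a-1)*x) / (T - x) := by
      field_simp; ring
    rw [hf_def]
    simp only [Fn9]
    rw [h1, Real.log_div hg.ne' hh.ne']
  -- derivatives of f on Ioo 0 T
  have hfd : ∀ x ∈ Set.Ioo 0 T, HasDerivAt f (F19 a T x) x := by
    intro x hx
    apply (hasDerivAt_Fn9 ha hx).congr_of_eventuallyEq
    filter_upwards [isOpen_Ioo.mem_nhds hx] with y hy
    exact hEq y hy
  have hderiv1 : ∀ x ∈ Set.Ioo 0 T, deriv f x = F19 a T x := fun x hx => (hfd x hx).deriv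
  have hderiv2 : ∀ x ∈ Set.Ioo 0 T, deriv (deriv f) x = F29 a T x := by
    intro x hx
    have hev : deriv f =ᶠ[nhds x] F19 a T := by
      filter_upwards [isOpen_Ioo.mem_nhds hx] with y hy
      exact hderiv1 y hy
    rw [hev.deriv_eq]
    exact (hasDerivAt_F19 ha hx).deriv
  have hcont : ContinuousOn f (Set.Ioo 0 T) := fun x hx =>
    (hfd x hx).continuousAt.continuousWithinAt
  -- strict concavity
  have hconc : StrictConcaveOn ℝ (Set.Ioo 0 T) f := by
    apply strictConcaveOn_of_deriv2_neg (convex_Ioo 0 T) hcont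
    intro x hx
    rw [interior_Ioo] at hx
    have : deriv^[2] f x = deriv (deriv f) x := by
      simp [Function.iterate_succ, Function.iterate_one]
    rw [this, hderiv2 x hx]
    exact F29_neg ha hx
  refine ⟨hconc, τs, ⟨hτsmem, ?_, ?_, ?_, rfl⟩, ?_⟩
  · -- IsMaxOn
    -- F19 is zero at τs
    have hgτs : T + (a-1)*τs = (T - τs) * x0 := by
      rw [hτsub, hτs_def]; field_simp; ring
    have hhτs : 0 < T - τs := hh_pos9 hτsmem
    have hF1τs : F19 a T τs = 0 := by
      simp only [F19]
      rw [hgτs, Real.log_mul hhτs.ne' hx0pos.ne', hx0_def, Real.log_exp]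
      have h1 : (a-1)*(T-τs) / ((T - τs) * x0) = w := by
        rw [hkey]; field_simp
      rw [← hx0_def, h1]
      ring
    -- F19 strictly anti on Ioo 0 T
    have hF1cont : ContinuousOn (F19 a T) (Set.Ioo 0 T) := fun x hx =>
      (hasDerivAt_F19 ha hx).continuousAt.continuousWithinAt
    have hanti : StrictAntiOn (F19 a T) (Set.Ioo 0 T) := by
      apply strictAntiOn_of_deriv_neg (convex_Ioo 0 T) hF1cont
      intro x hx
      rw [interior_Ioo] at hx
      rw [(hasDerivAt_F19 ha hx).deriv]
      exact F29_neg ha hx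
    -- f strictly monotone on Ioc 0 τs
    have hsub1 : Set.Ioc 0 τs ⊆ Set.Ioo 0 T := fun y hy => ⟨hy.1, lt_of_le_of_lt hy.2 hτsT⟩
    have hsub2 : Set.Ico τs T ⊆ Set.Ioo 0 T := fun y hy => ⟨lt_of_lt_of_le hτs0 hy.1, hy.2⟩
    have hmono : StrictMonoOn f (Set.Ioc 0 τs) := by
      apply strictMonoOn_of_deriv_pos (convex_Ioc 0 τs) (hcont.mono hsub1)
      intro x hx
      rw [interior_Ioc] at hx
      have hx' : x ∈ Set.Ioo 0 T := ⟨hx.1, lt_trans hx.2 hτsT⟩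
      rw [hderiv1 x hx']
      have := hanti hx' hτsmem hx.2
      rw [hF1τs] at this
      exact this
    have hanti2 : StrictAntiOn f (Set.Ico τs T) := by
      apply strictAntiOn_of_deriv_neg (convex_Ico τs T) (hcont.mono hsub2)
      intro x hx
      rw [interior_Ico] at hx
      have hx' : x ∈ Set.Ioo 0 T := ⟨lt_trans hτs0 hx.1, hx.2⟩
      rw [hderiv1 x hx']
      have := hanti hτsmem hx' hx.1
      rw [hF1τs] at this
      exact this
    intro y hy
    simp only [Set.mem_setOf_eq]
    rcases le_or_gt y τs with hle | hgt
    · rcases eq_or_lt_of_le hle with heq | hlt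
      · rw [heq]
      · exact le_of_lt (hmono ⟨hy.1, hle⟩ ⟨hτs0, le_refl _⟩ hlt)
    · exact le_of_lt (hanti2 ⟨le_refl _, hτsT⟩ ⟨le_of_lt hgt, hy.2⟩ hgt)
  · -- algebraic equation
    rw [hratio, hx0_def, Real.log_exp, ← hx0_def]
    nlinarith [hkey]
  · exact hratio
  · -- uniqueness
    rintro τ' ⟨-, -, -, -, h5⟩
    rw [h5, hτs_def, hx0_def]
end
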